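/- For any m ∈ ℕ and any weights α_{1,j}, α_{2,j} ≥ 0 (j = 1,…,m), the set Λ = Λ₀ ∪ (Λ₁ × ℝ) ∪ (ℝ × Λ₂) is a closed subset of ℝ² with zero two-dimensional Lebesgue measure. -/

import Mathlib

/-- The subset `Γ_{α₁,α₂}` of an ellipse in `ℝ²`. -/
def GammaSet (a1 a2 : ℝ) : Set (ℝ × ℝ) :=
  {s | 0 ≤ s.1 ∧ 0 ≤ s.2 ∧
    s.1 ^ 2 - s.1 * s.2 + s.2 ^ 2 = 2 * (1 + a1) * s.1 + 2 * (1 + a2) * s.2}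

/-- Membership in `Λ_{α₁,α₂}`: the smallest subset of `Γ_{α₁,α₂}` containing the six
distinguished points and closed under the two horizontal/vertical propagation rules. -/
inductive LambdaMem (a1 a2 : ℝ) : ℝ × ℝ → Prop
  | pt₀ : LambdaMem a1 a2 (0, 0)
  | pt₁ : LambdaMem a1 a2 (2 * (1 + a1), 0)
  | pt₂ : LambdaMem a1 a2 (0, 2 * (1 + a2))
  | pt₃ : LambdaMem a1 a2 (2 * (1 + a1), 2 * (2 + a1 + a2))
  | pt₄ : LambdaMem a1 a2 (2 * (2 + a1 + a2), 2 * (1 + a2))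
  | pt₅ : LambdaMem a1 a2 (2 * (2 + a1 + a2), 2 * (2 + a1 + a2))
  | rule₂ (a b c d : ℝ) (m : ℕ) : LambdaMem a1 a2 (a, b) → (c, d) ∈ GammaSet a1 a2 →
      c = a + 2 * m → b ≤ d → LambdaMem a1 a2 (c, d)
  | rule₃ (a b c d : ℝ) (n : ℕ) : LambdaMem a1 a2 (a, b) → (c, d) ∈ GammaSet a1 a2 →
      d = b + 2 * n → a ≤ c → LambdaMem a1 a2 (c, d)

/-- The set `Λ_{α₁,α₂}`. -/
def LambdaSet (a1 a2 : ℝ) : Set (ℝ × ℝ) := {p | LambdaMem a1 a2 p}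

/-- The set `Λ₀ = 2π { (2p,2q) + ∑ⱼ nⱼ (aⱼ,bⱼ) : p,q ∈ ℕ∪{0}, nⱼ ∈ {0,1},
(aⱼ,bⱼ) ∈ Λ_{α_{1,j},α_{2,j}} }`. -/
def LambdaZero (m : ℕ) (a1 a2 : Fin m → ℝ) : Set (ℝ × ℝ) :=
  {z | ∃ (p q : ℕ) (n : Fin m → ℕ) (ab : Fin m → ℝ × ℝ),
    (∀ j, n j = 0 ∨ n j = 1) ∧ (∀ j, ab j ∈ LambdaSet (a1 j) (a2 j)) ∧
      z = (2 * Real.pi) • (((2 * p : ℝ), (2 * q : ℝ)) + ∑ j, (n j : ℝ) • ab j)}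

/-- The set `Λᵢ = 4π { n + ∑ⱼ (1+α_{i,j}) nⱼ : n ∈ ℕ∪{0}, nⱼ ∈ {0,1} }` for weights `α_{i,j}`. -/
def LambdaI (m : ℕ) (a : Fin m → ℝ) : Set ℝ :=
  {x | ∃ (n : ℕ) (nj : Fin m → ℕ), (∀ j, nj j = 0 ∨ nj j = 1) ∧
    x = 4 * Real.pi * ((n : ℝ) + ∑ j, (1 + a j) * (nj j : ℝ))}


open Real Set MeasureTheory

namespace LambdaAux


/-- vertical partner swap -/
def vmap (a2 : ℝ) (p : ℝ × ℝ) : ℝ × ℝ := (p.1, p.1 + 2*(1+a2) - p.2)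
/-- horizontal partner swap -/
def hmap (a1 : ℝ) (p : ℝ × ℝ) : ℝ × ℝ := (p.2 + 2*(1+a1) - p.1, p.2)

lemma vmap_def (a2 : ℝ) (p : ℝ × ℝ) : vmap a2 p = (p.1, p.1 + 2*(1+a2) - p.2) := rfl
lemma hmap_def (a1 : ℝ) (p : ℝ × ℝ) : hmap a1 p = (p.2 + 2*(1+a1) - p.1, p.2) := rfl

def orbitSet (a1 a2 : ℝ) (p : ℝ × ℝ) : Set (ℝ × ℝ) :=
  {p, vmap a2 p, hmap a1 p, vmap a2 (hmap a1 p), hmap a1 (vmap a2 p),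
    vmap a2 (hmap a1 (vmap a2 p))}

lemma orbitSet_finite (a1 a2 : ℝ) (p : ℝ × ℝ) : (orbitSet a1 a2 p).Finite := by
  unfold orbitSet
  apply Set.Finite.insert; apply Set.Finite.insert; apply Set.Finite.insert
  apply Set.Finite.insert; apply Set.Finite.insert; exact Set.finite_singleton _

lemma mem_orbitSet_self (a1 a2 : ℝ) (p : ℝ × ℝ) : p ∈ orbitSet a1 a2 p := by
  simp [orbitSet]

lemma vv (a2 : ℝ) (r : ℝ × ℝ) : vmap a2 (vmap a2 r) = r := by
  simp only [vmap, Prod.ext_iff]; constructor <;> simp <;> ring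

lemma hh (a1 : ℝ) (r : ℝ × ℝ) : hmap a1 (hmap a1 r) = r := by
  simp only [hmap, Prod.ext_iff]; constructor <;> simp <;> ring

lemma hvh_eq (a1 a2 : ℝ) (p : ℝ × ℝ) :
    hmap a1 (vmap a2 (hmap a1 p)) = vmap a2 (hmap a1 (vmap a2 p)) := by
  simp only [hmap, vmap, Prod.ext_iff]; constructor <;> ring

lemma hvhv_eq (a1 a2 : ℝ) (p : ℝ × ℝ) :
    hmap a1 (vmap a2 (hmap a1 (vmap a2 p))) = vmap a2 (hmap a1 p) := by
  simp only [hmap, vmap, Prod.ext_iff]; constructor <;> ring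

lemma orbit_vmap (a1 a2 : ℝ) {p q : ℝ × ℝ} (hq : q ∈ orbitSet a1 a2 p) :
    vmap a2 q ∈ orbitSet a1 a2 p := by
  rcases hq with rfl | rfl | rfl | rfl | rfl | rfl
  · simp [orbitSet]
  · rw [vv]; simp [orbitSet]
  · simp [orbitSet]
  · rw [vv]; simp [orbitSet]
  · simp [orbitSet]
  · rw [vv]; simp [orbitSet]

lemma orbit_hmap (a1 a2 : ℝ) {p q : ℝ × ℝ} (hq : q ∈ orbitSet a1 a2 p) :
    hmap a1 q ∈ orbitSet a1 a2 p := by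
  rcases hq with rfl | rfl | rfl | rfl | rfl | rfl
  · simp [orbitSet]
  · simp [orbitSet]
  · rw [hh]; simp [orbitSet]
  · rw [hvh_eq]; simp [orbitSet]
  · rw [hh]; simp [orbitSet]
  · rw [hvhv_eq]; simp [orbitSet]



noncomputable def ryp (a1 a2 c : ℝ) : ℝ :=
  ((c + 2*(1+a2)) + Real.sqrt ((c + 2*(1+a2))^2 - 4*(c^2 - 2*(1+a1)*c)))/2
noncomputable def rym (a1 a2 c : ℝ) : ℝ :=
  ((c + 2*(1+a2)) - Real.sqrt ((c + 2*(1+a2))^2 - 4*(c^2 - 2*(1+a1)*c)))/2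
noncomputable def rxp (a1 a2 d : ℝ) : ℝ :=
  ((d + 2*(1+a1)) + Real.sqrt ((d + 2*(1+a1))^2 - 4*(d^2 - 2*(1+a2)*d)))/2
noncomputable def rxm (a1 a2 d : ℝ) : ℝ :=
  ((d + 2*(1+a1)) - Real.sqrt ((d + 2*(1+a1))^2 - 4*(d^2 - 2*(1+a2)*d)))/2

lemma rootY (a1 a2 : ℝ) {c d : ℝ}
    (h : c^2 - c*d + d^2 = 2*(1+a1)*c + 2*(1+a2)*d) :
    d = ryp a1 a2 c ∨ d = rym a1 a2 c := by
  have key : Real.sqrt ((c + 2*(1+a2))^2 - 4*(c^2 - 2*(1+a1)*c))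
      = |2*d - (c + 2*(1+a2))| := by
    rw [show (c + 2*(1+a2))^2 - 4*(c^2 - 2*(1+a1)*c) = (2*d - (c + 2*(1+a2)))^2 by
      linear_combination (-4) * h]
    exact Real.sqrt_sq_eq_abs _
  rcases abs_cases (2*d - (c + 2*(1+a2))) with ⟨he, _⟩ | ⟨he, _⟩
  · left; unfold ryp; rw [key, he]; ring
  · right; unfold rym; rw [key, he]; ring

lemma rootX (a1 a2 : ℝ) {c d : ℝ}
    (h : c^2 - c*d + d^2 = 2*(1+a1)*c + 2*(1+a2)*d) :
    c = rxp a1 a2 d ∨ c = rxm a1 a2 d := by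
  have key : Real.sqrt ((d + 2*(1+a1))^2 - 4*(d^2 - 2*(1+a2)*d))
      = |2*c - (d + 2*(1+a1))| := by
    rw [show (d + 2*(1+a1))^2 - 4*(d^2 - 2*(1+a2)*d) = (2*c - (d + 2*(1+a1)))^2 by
      linear_combination (-4) * h]
    exact Real.sqrt_sq_eq_abs _
  rcases abs_cases (2*c - (d + 2*(1+a1))) with ⟨he, _⟩ | ⟨he, _⟩
  · left; unfold rxp; rw [key, he]; ring
  · right; unfold rxm; rw [key, he]; ring

lemma gamma_bound {a1 a2 : ℝ} (h1 : 0 ≤ a1) (h2 : 0 ≤ a2) {p : ℝ × ℝ}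
    (hp : p ∈ GammaSet a1 a2) : p.1 + p.2 ≤ 16 + 8*a1 + 8*a2 := by
  obtain ⟨hx, hy, he⟩ := hp
  nlinarith [sq_nonneg (p.1 - p.2), mul_nonneg hx hy, mul_nonneg h1 hx,
    mul_nonneg h2 hy, mul_nonneg h1 hy, mul_nonneg h2 hx, hx, hy]

lemma vertical_partner (a1 a2 : ℝ) {a b d : ℝ}
    (hb : a^2 - a*b + b^2 = 2*(1+a1)*a + 2*(1+a2)*b)
    (hd : a^2 - a*d + d^2 = 2*(1+a1)*a + 2*(1+a2)*d) :
    d = b ∨ d = a + 2*(1+a2) - b := by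
  have h : (d - b) * (d + b - a - 2*(1+a2)) = 0 := by linear_combination hd - hb
  rcases mul_eq_zero.mp h with h | h
  · left; linarith
  · right; linarith

lemma horizontal_partner (a1 a2 : ℝ) {a b c : ℝ}
    (hb : a^2 - a*b + b^2 = 2*(1+a1)*a + 2*(1+a2)*b)
    (hc : c^2 - c*b + b^2 = 2*(1+a1)*c + 2*(1+a2)*b) :
    c = a ∨ c = b + 2*(1+a1) - a := by
  have h : (c - a) * (c + a - b - 2*(1+a1)) = 0 := by linear_combination hc - hb
  rcases mul_eq_zero.mp h with h | h
  · left; linarith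
  · right; linarith

noncomputable def bigN (a1 a2 : ℝ) : ℕ := ⌈8 + 4*a1 + 4*a2⌉₊

def basePts (a1 a2 : ℝ) : Set (ℝ × ℝ) :=
  {(0,0), (2*(1+a1), 0), (0, 2*(1+a2)), (2*(1+a1), 2*(2+a1+a2)),
   (2*(2+a1+a2), 2*(1+a2)), (2*(2+a1+a2), 2*(2+a1+a2))}

lemma basePts_finite (a1 a2 : ℝ) : (basePts a1 a2).Finite := by
  unfold basePts
  apply Set.Finite.insert; apply Set.Finite.insert; apply Set.Finite.insert
  apply Set.Finite.insert; apply Set.Finite.insert; exact Set.finite_singleton _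

noncomputable def stepPts (a1 a2 : ℝ) (p : ℝ × ℝ) : Set (ℝ × ℝ) :=
  ⋃ k ∈ Finset.range (bigN a1 a2),
    ({(p.1 + 2*((k:ℝ)+1), ryp a1 a2 (p.1 + 2*((k:ℝ)+1))),
      (p.1 + 2*((k:ℝ)+1), rym a1 a2 (p.1 + 2*((k:ℝ)+1))),
      (rxp a1 a2 (p.2 + 2*((k:ℝ)+1)), p.2 + 2*((k:ℝ)+1)),
      (rxm a1 a2 (p.2 + 2*((k:ℝ)+1)), p.2 + 2*((k:ℝ)+1))} : Set (ℝ × ℝ))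

lemma stepPts_finite (a1 a2 : ℝ) (p : ℝ × ℝ) : (stepPts a1 a2 p).Finite := by
  apply Set.Finite.biUnion (Finset.finite_toSet _)
  intro k _
  apply Set.Finite.insert; apply Set.Finite.insert; apply Set.Finite.insert
  exact Set.finite_singleton _

noncomputable def TT (a1 a2 : ℝ) : ℕ → Set (ℝ × ℝ)
  | 0 => ⋃ b ∈ basePts a1 a2, orbitSet a1 a2 b
  | (k+1) => TT a1 a2 k ∪ ⋃ p ∈ TT a1 a2 k, ⋃ q ∈ stepPts a1 a2 p, orbitSet a1 a2 q

lemma TT_finite (a1 a2 : ℝ) : ∀ k, (TT a1 a2 k).Finite := by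
  intro k
  induction k with
  | zero => exact Set.Finite.biUnion (basePts_finite a1 a2) fun b _ => orbitSet_finite a1 a2 b
  | succ k ih =>
    refine Set.Finite.union ih (Set.Finite.biUnion ih fun p _ => ?_)
    exact Set.Finite.biUnion (stepPts_finite a1 a2 p) fun q _ => orbitSet_finite a1 a2 q

lemma TT_vmap (a1 a2 : ℝ) : ∀ k, ∀ q ∈ TT a1 a2 k, vmap a2 q ∈ TT a1 a2 k := by
  intro k
  induction k with
  | zero =>
    intro q hq
    obtain ⟨b, hb, hqb⟩ := Set.mem_iUnion₂.mp hq
    exact Set.mem_iUnion₂.mpr ⟨b, hb, orbit_vmap a1 a2 hqb⟩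
  | succ k ih =>
    intro q hq
    rcases hq with hq | hq
    · exact Or.inl (ih q hq)
    · obtain ⟨p, hp, hq⟩ := Set.mem_iUnion₂.mp hq
      obtain ⟨r, hr, hqr⟩ := Set.mem_iUnion₂.mp hq
      exact Or.inr (Set.mem_iUnion₂.mpr ⟨p, hp, Set.mem_iUnion₂.mpr ⟨r, hr, orbit_vmap a1 a2 hqr⟩⟩)

lemma TT_hmap (a1 a2 : ℝ) : ∀ k, ∀ q ∈ TT a1 a2 k, hmap a1 q ∈ TT a1 a2 k := by
  intro k
  induction k with
  | zero =>
    intro q hq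
    obtain ⟨b, hb, hqb⟩ := Set.mem_iUnion₂.mp hq
    exact Set.mem_iUnion₂.mpr ⟨b, hb, orbit_hmap a1 a2 hqb⟩
  | succ k ih =>
    intro q hq
    rcases hq with hq | hq
    · exact Or.inl (ih q hq)
    · obtain ⟨p, hp, hq⟩ := Set.mem_iUnion₂.mp hq
      obtain ⟨r, hr, hqr⟩ := Set.mem_iUnion₂.mp hq
      exact Or.inr (Set.mem_iUnion₂.mpr ⟨p, hp, Set.mem_iUnion₂.mpr ⟨r, hr, orbit_hmap a1 a2 hqr⟩⟩)

lemma TT_mono (a1 a2 : ℝ) {k l : ℕ} (h : k ≤ l) : TT a1 a2 k ⊆ TT a1 a2 l := by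
  induction l with
  | zero => simpa [Nat.le_zero.mp h] using subset_rfl
  | succ l ih =>
    rcases Nat.lt_or_ge k (l+1) with hl | hl
    · exact (ih (Nat.lt_succ_iff.mp hl)).trans (Set.subset_union_left)
    · have : k = l + 1 := le_antisymm h hl
      subst this; exact subset_rfl

lemma lambdaMem_gamma {a1 a2 : ℝ} (h1 : 0 ≤ a1) (h2 : 0 ≤ a2) {p : ℝ × ℝ}
    (h : LambdaMem a1 a2 p) : p ∈ GammaSet a1 a2 := by
  induction h with
  | pt₀ => exact ⟨le_refl _, le_refl _, by norm_num⟩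
  | pt₁ => exact ⟨by norm_num; linarith, le_refl _, by ring⟩
  | pt₂ => exact ⟨le_refl _, by norm_num; linarith, by ring⟩
  | pt₃ => exact ⟨by norm_num; linarith, by norm_num; linarith, by ring⟩
  | pt₄ => exact ⟨by norm_num; linarith, by norm_num; linarith, by ring⟩
  | pt₅ => exact ⟨by norm_num; linarith, by norm_num; linarith, by ring⟩
  | rule₂ a b c d m hab hΓ hc hbd ih => exact hΓ
  | rule₃ a b c d n hab hΓ hd hac ih => exact hΓ

lemma base_mem_TT0 (a1 a2 : ℝ) {b : ℝ × ℝ} (hb : b ∈ basePts a1 a2) :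
    b ∈ TT a1 a2 0 :=
  Set.mem_iUnion₂.mpr ⟨b, hb, mem_orbitSet_self a1 a2 b⟩

lemma mem_TT {a1 a2 : ℝ} (h1 : 0 ≤ a1) (h2 : 0 ≤ a2) {p : ℝ × ℝ}
    (hp : LambdaMem a1 a2 p) : ∀ k : ℕ, p.1 + p.2 ≤ 2*k → p ∈ TT a1 a2 k := by
  induction hp with
  | pt₀ => exact fun k _ => TT_mono a1 a2 (Nat.zero_le k) (base_mem_TT0 a1 a2 (by simp [basePts]))
  | pt₁ => exact fun k _ => TT_mono a1 a2 (Nat.zero_le k) (base_mem_TT0 a1 a2 (by simp [basePts]))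
  | pt₂ => exact fun k _ => TT_mono a1 a2 (Nat.zero_le k) (base_mem_TT0 a1 a2 (by simp [basePts]))
  | pt₃ => exact fun k _ => TT_mono a1 a2 (Nat.zero_le k) (base_mem_TT0 a1 a2 (by simp [basePts]))
  | pt₄ => exact fun k _ => TT_mono a1 a2 (Nat.zero_le k) (base_mem_TT0 a1 a2 (by simp [basePts]))
  | pt₅ => exact fun k _ => TT_mono a1 a2 (Nat.zero_le k) (base_mem_TT0 a1 a2 (by simp [basePts]))
  | rule₂ a b c d m hab hΓ hc hbd ih =>
    intro k hk
    have habΓ : (a, b) ∈ GammaSet a1 a2 := lambdaMem_gamma h1 h2 hab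
    have heqb : a^2 - a*b + b^2 = 2*(1+a1)*a + 2*(1+a2)*b := habΓ.2.2
    have heqd : c^2 - c*d + d^2 = 2*(1+a1)*c + 2*(1+a2)*d := hΓ.2.2
    simp only at hk
    rcases Nat.eq_zero_or_pos m with rfl | hm
    · have hca : c = a := by simpa using hc
      have heqd' : a^2 - a*d + d^2 = 2*(1+a1)*a + 2*(1+a2)*d := by rw [← hca]; exact heqd
      rcases vertical_partner a1 a2 heqb heqd' with rfl | hd2
      · have : (c, d) = (a, d) := by rw [hca]
        rw [this]
        exact ih k (by simp only; linarith)
      · have hvd : (c, d) = vmap a2 (a, b) := by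
          rw [vmap_def]; simp only [Prod.mk.injEq]; exact ⟨hca, by rw [hd2]⟩
        rw [hvd]
        exact TT_vmap a1 a2 k _ (ih k (by simp only; linarith))
    · -- heavy step
      have hbound := gamma_bound h1 h2 hΓ
      simp only at hbound
      have ha0 : (0:ℝ) ≤ a := habΓ.1
      have hd0 : (0:ℝ) ≤ d := hΓ.2.1
      have hm1 : (1:ℝ) ≤ (m:ℝ) := by exact_mod_cast hm
      have hmR : (m:ℝ) ≤ 8 + 4*a1 + 4*a2 := by linarith
      have hmN : m ≤ bigN a1 a2 := by
        have h8 : (8 + 4*a1 + 4*a2 : ℝ) ≤ (bigN a1 a2 : ℝ) := Nat.le_ceil _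
        exact_mod_cast hmR.trans h8
      have hk1 : 1 ≤ k := by
        by_contra hk0
        have : k = 0 := by omega
        subst this
        simp only [Nat.cast_zero] at hk
        linarith
      obtain ⟨k', rfl⟩ : ∃ k', k = k' + 1 := ⟨k - 1, by omega⟩
      have hab' : (a, b) ∈ TT a1 a2 k' := by
        apply ih
        have : ((k' + 1 : ℕ) : ℝ) = (k' : ℝ) + 1 := by push_cast; ring
        simp only
        rw [this] at hk
        linarith
      have hmem4 : (c, d) ∈ stepPts a1 a2 (a, b) := by
        apply Set.mem_iUnion₂.mpr
        refine ⟨m - 1, Finset.mem_range.mpr (by omega), ?_⟩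
        have hcast : ((m - 1 : ℕ) : ℝ) + 1 = (m : ℝ) := by
          have : (1:ℕ) ≤ m := hm
          push_cast [this]; ring
        have hc' : c = (a, b).1 + 2*(((m-1:ℕ):ℝ)+1) := by rw [hcast]; simpa using hc
        rcases rootY a1 a2 heqd with hr | hr
        · left; rw [Prod.mk.injEq]; exact ⟨hc', by rw [hr, hc']⟩
        · right; left; rw [Prod.mk.injEq]; exact ⟨hc', by rw [hr, hc']⟩
      refine Or.inr (Set.mem_iUnion₂.mpr ⟨(a,b), hab', Set.mem_iUnion₂.mpr ⟨(c,d), hmem4, mem_orbitSet_self a1 a2 _⟩⟩)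
  | rule₃ a b c d n hab hΓ hd hac ih =>
    intro k hk
    have habΓ : (a, b) ∈ GammaSet a1 a2 := lambdaMem_gamma h1 h2 hab
    have heqb : a^2 - a*b + b^2 = 2*(1+a1)*a + 2*(1+a2)*b := habΓ.2.2
    have heqd : c^2 - c*d + d^2 = 2*(1+a1)*c + 2*(1+a2)*d := hΓ.2.2
    simp only at hk
    rcases Nat.eq_zero_or_pos n with rfl | hn
    · have hdb : d = b := by simpa using hd
      have heqc' : c^2 - c*b + b^2 = 2*(1+a1)*c + 2*(1+a2)*b := by rw [← hdb]; exact heqd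
      rcases horizontal_partner a1 a2 heqb heqc' with rfl | hc2
      · have : (c, d) = (c, b) := by rw [hdb]
        rw [this]
        exact ih k (by simp only; linarith)
      · have hvd : (c, d) = hmap a1 (a, b) := by
          rw [hmap_def]; simp only [Prod.mk.injEq]; exact ⟨by rw [hc2], hdb⟩
        rw [hvd]
        exact TT_hmap a1 a2 k _ (ih k (by simp only; linarith))
    · -- heavy step
      have hbound := gamma_bound h1 h2 hΓ
      simp only at hbound
      have hb0 : (0:ℝ) ≤ b := habΓ.2.1
      have hc0 : (0:ℝ) ≤ c := hΓ.1
      have hn1 : (1:ℝ) ≤ (n:ℝ) := by exact_mod_cast hn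
      have hnR : (n:ℝ) ≤ 8 + 4*a1 + 4*a2 := by linarith
      have hnN : n ≤ bigN a1 a2 := by
        have h8 : (8 + 4*a1 + 4*a2 : ℝ) ≤ (bigN a1 a2 : ℝ) := Nat.le_ceil _
        exact_mod_cast hnR.trans h8
      have hk1 : 1 ≤ k := by
        by_contra hk0
        have : k = 0 := by omega
        subst this
        simp only [Nat.cast_zero] at hk
        linarith
      obtain ⟨k', rfl⟩ : ∃ k', k = k' + 1 := ⟨k - 1, by omega⟩
      have hab' : (a, b) ∈ TT a1 a2 k' := by
        apply ih
        have : ((k' + 1 : ℕ) : ℝ) = (k' : ℝ) + 1 := by push_cast; ring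
        simp only
        rw [this] at hk
        linarith
      have hmem4 : (c, d) ∈ stepPts a1 a2 (a, b) := by
        apply Set.mem_iUnion₂.mpr
        refine ⟨n - 1, Finset.mem_range.mpr (by omega), ?_⟩
        have hcast : ((n - 1 : ℕ) : ℝ) + 1 = (n : ℝ) := by
          have : (1:ℕ) ≤ n := hn
          push_cast [this]; ring
        have hd' : d = (a, b).2 + 2*(((n-1:ℕ):ℝ)+1) := by rw [hcast]; simpa using hd
        rcases rootX a1 a2 heqd with hr | hr
        · right; right; left; rw [Prod.mk.injEq]; exact ⟨by rw [hr, hd'], hd'⟩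
        · right; right; right; simp only [Set.mem_singleton_iff, Prod.mk.injEq]; exact ⟨by rw [hr, hd'], hd'⟩
      refine Or.inr (Set.mem_iUnion₂.mpr ⟨(a,b), hab', Set.mem_iUnion₂.mpr ⟨(c,d), hmem4, mem_orbitSet_self a1 a2 _⟩⟩)


lemma lambdaSet_finite {a1 a2 : ℝ} (h1 : 0 ≤ a1) (h2 : 0 ≤ a2) :
    (LambdaSet a1 a2).Finite := by
  apply (TT_finite a1 a2 (bigN a1 a2)).subset
  intro p hp
  apply mem_TT h1 h2 hp
  have hb := gamma_bound h1 h2 (lambdaMem_gamma h1 h2 hp)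
  have h8 : (8 + 4*a1 + 4*a2 : ℝ) ≤ (bigN a1 a2 : ℝ) := Nat.le_ceil _
  push_cast
  linarith


def NR : Set ℝ := Set.range ((↑) : ℕ → ℝ)

lemma NR_closed : IsClosed NR := Nat.isClosedEmbedding_coe_real.isClosed_range

lemma fourpi_pos : (0:ℝ) < 4 * Real.pi := by positivity

noncomputable def latC (w : ℝ × ℝ) : Set (ℝ × ℝ) :=
  (fun z : ℝ × ℝ => (z.1 - w.1)/(4*Real.pi)) ⁻¹' NR ∩
    (fun z : ℝ × ℝ => (z.2 - w.2)/(4*Real.pi)) ⁻¹' NR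

lemma latC_closed (w : ℝ × ℝ) : IsClosed (latC w) := by
  apply IsClosed.inter
  · exact NR_closed.preimage (by fun_prop)
  · exact NR_closed.preimage (by fun_prop)

lemma latC_mem (w z : ℝ × ℝ) :
    z ∈ latC w ↔ ∃ p q : ℕ, z.1 = 4*Real.pi*p + w.1 ∧ z.2 = 4*Real.pi*q + w.2 := by
  have h4 : (4*Real.pi) ≠ 0 := ne_of_gt fourpi_pos
  constructor
  · rintro ⟨⟨p, hp⟩, ⟨q, hq⟩⟩
    refine ⟨p, q, ?_, ?_⟩
    · field_simp at hp; linarith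
    · field_simp at hq; linarith
  · rintro ⟨p, q, hp, hq⟩
    refine ⟨⟨p, ?_⟩, ⟨q, ?_⟩⟩
    · field_simp [hp]; linarith
    · field_simp [hq]; linarith

lemma latC_countable (w : ℝ × ℝ) : (latC w).Countable := by
  have hsub : latC w ⊆
      (fun pq : ℕ × ℕ => ((4*Real.pi*pq.1 + w.1, 4*Real.pi*pq.2 + w.2) : ℝ × ℝ)) '' Set.univ := by
    intro z hz
    obtain ⟨p, q, hp, hq⟩ := (latC_mem w z).mp hz
    exact ⟨(p, q), Set.mem_univ _, by simp [← hp, ← hq]⟩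
  exact (Set.countable_univ.image _).mono hsub

def Cset (m : ℕ) (a1 a2 : Fin m → ℝ) : Set (ℝ × ℝ) :=
  {w | ∃ (n : Fin m → ℕ) (ab : Fin m → ℝ × ℝ),
    (∀ j, n j = 0 ∨ n j = 1) ∧ (∀ j, ab j ∈ LambdaSet (a1 j) (a2 j)) ∧
      w = (2 * Real.pi) • ∑ j, (n j : ℝ) • ab j}

lemma Cset_finite (m : ℕ) (a1 a2 : Fin m → ℝ)
    (h1 : ∀ j, 0 ≤ a1 j) (h2 : ∀ j, 0 ≤ a2 j) : (Cset m a1 a2).Finite := by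
  have hN : ({f : Fin m → ℕ | ∀ j, f j ∈ ({0, 1} : Set ℕ)}).Finite :=
    Set.Finite.pi' (fun j => by
      apply Set.Finite.insert; exact Set.finite_singleton _)
  have hAB : ({ab : Fin m → ℝ × ℝ | ∀ j, ab j ∈ LambdaSet (a1 j) (a2 j)}).Finite :=
    Set.Finite.pi' (fun j => lambdaSet_finite (h1 j) (h2 j))
  apply Set.Finite.subset
    (Set.Finite.image (fun na : (Fin m → ℕ) × (Fin m → ℝ × ℝ) =>
      (2 * Real.pi) • ∑ j, ((na.1 j : ℝ)) • na.2 j) (hN.prod hAB))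
  rintro w ⟨n, ab, hn, hab, rfl⟩
  exact ⟨(n, ab), ⟨fun j => by rcases hn j with h | h <;> simp [h], hab⟩, rfl⟩

lemma LambdaZero_eq (m : ℕ) (a1 a2 : Fin m → ℝ) :
    LambdaZero m a1 a2 = ⋃ w ∈ Cset m a1 a2, latC w := by
  ext z
  simp only [Set.mem_iUnion₂]
  constructor
  · rintro ⟨p, q, n, ab, hn, hab, rfl⟩
    refine ⟨(2 * Real.pi) • ∑ j, (n j : ℝ) • ab j, ⟨n, ab, hn, hab, rfl⟩, ?_⟩
    rw [latC_mem]
    refine ⟨p, q, ?_, ?_⟩ <;>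
      simp only [Prod.smul_fst, Prod.smul_snd, Prod.fst_add, Prod.snd_add, smul_eq_mul] <;> ring
  · rintro ⟨w, ⟨n, ab, hn, hab, rfl⟩, hz⟩
    rw [latC_mem] at hz
    obtain ⟨p, q, hp, hq⟩ := hz
    refine ⟨p, q, n, ab, hn, hab, ?_⟩
    apply Prod.ext
    · simp only [hp, Prod.smul_fst, Prod.fst_add, smul_eq_mul]; ring
    · simp only [hq, Prod.smul_snd, Prod.snd_add, smul_eq_mul]; ring

def Ci (m : ℕ) (a : Fin m → ℝ) : Set ℝ :=
  {t | ∃ nj : Fin m → ℕ, (∀ j, nj j = 0 ∨ nj j = 1) ∧ t = ∑ j, (1 + a j) * (nj j : ℝ)}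

lemma Ci_finite (m : ℕ) (a : Fin m → ℝ) : (Ci m a).Finite := by
  have hN : ({f : Fin m → ℕ | ∀ j, f j ∈ ({0, 1} : Set ℕ)}).Finite :=
    Set.Finite.pi' (fun j => by
      apply Set.Finite.insert; exact Set.finite_singleton _)
  apply Set.Finite.subset (Set.Finite.image (fun f : Fin m → ℕ => ∑ j, (1 + a j) * (f j : ℝ)) hN)
  rintro t ⟨nj, hnj, rfl⟩
  exact ⟨nj, fun j => by rcases hnj j with h | h <;> simp [h], rfl⟩

noncomputable def lat1 (c : ℝ) : Set ℝ := (fun x : ℝ => x/(4*Real.pi) - c) ⁻¹' NR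

lemma lat1_closed (c : ℝ) : IsClosed (lat1 c) := NR_closed.preimage (by fun_prop)

lemma lat1_mem (c x : ℝ) : x ∈ lat1 c ↔ ∃ n : ℕ, x = 4*Real.pi*((n:ℝ) + c) := by
  have h4 : (4*Real.pi) ≠ 0 := ne_of_gt fourpi_pos
  constructor
  · rintro ⟨n, hn⟩
    refine ⟨n, ?_⟩
    field_simp at hn; linarith
  · rintro ⟨n, rfl⟩
    exact ⟨n, by field_simp; ring⟩

lemma lat1_countable (c : ℝ) : (lat1 c).Countable := by
  have hsub : lat1 c ⊆ Set.range (fun n : ℕ => 4*Real.pi*((n:ℝ) + c)) := by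
    intro x hx
    obtain ⟨n, hn⟩ := (lat1_mem c x).mp hx
    exact ⟨n, hn.symm⟩
  exact (Set.countable_range _).mono hsub

lemma LambdaI_eq (m : ℕ) (a : Fin m → ℝ) :
    LambdaI m a = ⋃ c ∈ Ci m a, lat1 c := by
  ext x
  simp only [Set.mem_iUnion₂]
  constructor
  · rintro ⟨n, nj, hnj, rfl⟩
    exact ⟨∑ j, (1 + a j) * (nj j : ℝ), ⟨nj, hnj, rfl⟩, (lat1_mem _ _).mpr ⟨n, rfl⟩⟩
  · rintro ⟨c, ⟨nj, hnj, rfl⟩, hx⟩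
    obtain ⟨n, rfl⟩ := (lat1_mem _ _).mp hx
    exact ⟨n, nj, hnj, rfl⟩

lemma LambdaI_closed (m : ℕ) (a : Fin m → ℝ) : IsClosed (LambdaI m a) := by
  rw [LambdaI_eq]
  exact (Ci_finite m a).isClosed_biUnion fun c _ => lat1_closed c

lemma LambdaI_countable (m : ℕ) (a : Fin m → ℝ) : (LambdaI m a).Countable := by
  rw [LambdaI_eq]
  exact (Ci_finite m a).countable.biUnion fun c _ => lat1_countable c


end LambdaAux

/-- `Λ = Λ₀ ∪ (Λ₁ × ℝ) ∪ (ℝ × Λ₂)` is closed in `ℝ²` and has zero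
two-dimensional Lebesgue measure. -/
theorem Lambda_closed_measure_zero (m : ℕ) (a1 a2 : Fin m → ℝ)
    (h1 : ∀ j, 0 ≤ a1 j) (h2 : ∀ j, 0 ≤ a2 j) :
    IsClosed (LambdaZero m a1 a2 ∪ (LambdaI m a1) ×ˢ (Set.univ : Set ℝ) ∪
        (Set.univ : Set ℝ) ×ˢ (LambdaI m a2)) ∧
      MeasureTheory.volume (LambdaZero m a1 a2 ∪ (LambdaI m a1) ×ˢ (Set.univ : Set ℝ) ∪
        (Set.univ : Set ℝ) ×ˢ (LambdaI m a2)) = 0 := by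

  have hZclosed : IsClosed (LambdaZero m a1 a2) := by
    rw [LambdaAux.LambdaZero_eq]
    exact (LambdaAux.Cset_finite m a1 a2 h1 h2).isClosed_biUnion
      fun w _ => LambdaAux.latC_closed w
  have hZcount : (LambdaZero m a1 a2).Countable := by
    rw [LambdaAux.LambdaZero_eq]
    exact (LambdaAux.Cset_finite m a1 a2 h1 h2).countable.biUnion
      fun w _ => LambdaAux.latC_countable w
  have hna : MeasureTheory.NoAtoms (volume : Measure (ℝ × ℝ)) := by
    rw [MeasureTheory.Measure.volume_eq_prod]
    exact ⟨fun ⟨a, b⟩ => by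
      rw [← Set.singleton_prod_singleton, MeasureTheory.Measure.prod_prod, measure_singleton, zero_mul]⟩
  constructor
  · exact ((hZclosed.union ((LambdaAux.LambdaI_closed m a1).prod isClosed_univ))).union
      (isClosed_univ.prod (LambdaAux.LambdaI_closed m a2))
  · apply measure_union_null
    apply measure_union_null
    · exact hZcount.measure_zero _
    · rw [MeasureTheory.Measure.volume_eq_prod, MeasureTheory.Measure.prod_prod,
        (LambdaAux.LambdaI_countable m a1).measure_zero, zero_mul]
    · rw [MeasureTheory.Measure.volume_eq_prod, MeasureTheory.Measure.prod_prod,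
        (LambdaAux.LambdaI_countable m a2).measure_zero, mul_zero]
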